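/- Let A be an N×N matrix with ‖Ah‖ ≤ 1 and ‖e^{At}‖ ≤ c+1 for all t ≥ 0, and suppose 2m(c+1)(c+2)/(k+1)! ≤ 1. Let y(t) = e^{At} y_in and x_{j,0} = T_k(Ah)^j y_in with T_k(Ah) = ∑_{l=0}^{k} (Ah)^l/l!. Then for all 0 ≤ j ≤ m, ‖y(jh) − x_{j,0}‖ ≤ 2j(c+1)(c+2)‖y_in‖/(k+1)!. -/

import Mathlib

set_option maxHeartbeats 1000000
set_option synthInstance.maxHeartbeats 400000


open NormedSpace

private lemma fact_two_pow_le (k i : ℕ) :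
    (k + 1).factorial * 2 ^ i ≤ (i + k + 1).factorial := by
  induction i with
  | zero => simp
  | succ i ih =>
    have h1 : (i + 1 + k + 1).factorial = (i + k + 2) * (i + k + 1).factorial := by
      have : i + 1 + k + 1 = (i + k + 1) + 1 := by ring
      rw [this, Nat.factorial_succ]
    have h2 : 2 ≤ i + k + 2 := by omega
    calc (k + 1).factorial * 2 ^ (i + 1) = 2 * ((k + 1).factorial * 2 ^ i) := by ring
    _ ≤ 2 * (i + k + 1).factorial := by omega
    _ ≤ (i + k + 2) * (i + k + 1).factorial := Nat.mul_le_mul_right _ h2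
    _ = (i + 1 + k + 1).factorial := h1.symm

private lemma tail_bound {𝔸 : Type*} [NormedRing 𝔸] [NormedAlgebra ℂ 𝔸] [CompleteSpace 𝔸]
    (k : ℕ) (B : 𝔸) (hB : ‖B‖ ≤ 1) :
    ‖exp B - ∑ l ∈ Finset.range (k + 1), (1 / (Nat.factorial l) : ℂ) • B ^ l‖ ≤
      2 / (Nat.factorial (k + 1)) := by
  have hsum : Summable fun n : ℕ => ((n.factorial : ℂ))⁻¹ • B ^ n := expSeries_summable' B
  have hkey := Summable.sum_add_tsum_nat_add (k + 1) hsum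
  have heq : exp B - ∑ l ∈ Finset.range (k + 1), (1 / (Nat.factorial l) : ℂ) • B ^ l =
      ∑' i : ℕ, (((i + (k + 1)).factorial : ℂ))⁻¹ • B ^ (i + (k + 1)) := by
    rw [exp_eq_tsum ℂ]
    simp only [one_div]
    rw [← hkey]
    abel
  rw [heq]
  have hgeo : HasSum (fun i : ℕ => (1 / ((k + 1).factorial : ℝ)) * (1 / 2) ^ i)
      (2 / ((k + 1).factorial : ℝ)) := by
    have h0 : HasSum (fun i : ℕ => ((1 : ℝ) / 2) ^ i) (1 - 1 / 2)⁻¹ :=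
      hasSum_geometric_of_lt_one (by norm_num) (by norm_num)
    have := h0.mul_left (1 / ((k + 1).factorial : ℝ))
    have e : (2 / ((k + 1).factorial : ℝ)) = 1 / ((k + 1).factorial : ℝ) * (1 - 1 / 2)⁻¹ := by
      rw [show (1 : ℝ) - 1 / 2 = 2⁻¹ by norm_num, inv_inv]; ring
    rw [e]; exact this
  refine tsum_of_norm_bounded hgeo fun i => ?_
  have hpow : ‖B ^ (i + (k + 1))‖ ≤ 1 := by
    calc ‖B ^ (i + (k + 1))‖ ≤ ‖B‖ ^ (i + (k + 1)) := norm_pow_le' B (by omega)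
    _ ≤ 1 ^ (i + (k + 1)) := pow_le_pow_left₀ (norm_nonneg B) hB _
    _ = 1 := one_pow _
  have hns : ‖(((i + (k + 1)).factorial : ℂ))⁻¹ • B ^ (i + (k + 1))‖ =
      (((i + (k + 1)).factorial : ℝ))⁻¹ * ‖B ^ (i + (k + 1))‖ := by
    rw [norm_smul, norm_inv]
    norm_num
  rw [hns]
  have hfpos : (0 : ℝ) < ((i + (k + 1)).factorial : ℝ) := by positivity
  have hfle : (((i + (k + 1)).factorial : ℝ))⁻¹ ≤ 1 / ((k + 1).factorial : ℝ) * (1 / 2) ^ i := by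
    have hfact := fact_two_pow_le k i
    have hfact' : ((k + 1).factorial : ℝ) * 2 ^ i ≤ ((i + (k + 1)).factorial : ℝ) := by
      have : ((k + 1).factorial * 2 ^ i : ℕ) ≤ ((i + k + 1).factorial : ℕ) := hfact
      have := (Nat.cast_le (α := ℝ)).mpr this
      push_cast at this
      rwa [show i + (k + 1) = i + k + 1 by omega]
    rw [one_div, div_pow, one_pow, one_div, ← mul_inv]
    exact inv_anti₀ (by positivity) hfact'
  calc (((i + (k + 1)).factorial : ℝ))⁻¹ * ‖B ^ (i + (k + 1))‖ ≤
      (((i + (k + 1)).factorial : ℝ))⁻¹ * 1 := by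
        apply mul_le_mul_of_nonneg_left hpow (by positivity)
  _ = (((i + (k + 1)).factorial : ℝ))⁻¹ := mul_one _
  _ ≤ 1 / ((k + 1).factorial : ℝ) * (1 / 2) ^ i := hfle

private lemma telescope {R : Type*} [Ring R] (E T : R) :
    ∀ j : ℕ, E ^ j - T ^ j = ∑ i ∈ Finset.range j, E ^ (j - 1 - i) * (E - T) * T ^ i := by
  intro j
  induction j with
  | zero => simp
  | succ j ih =>
    have hstep : E ^ (j + 1) - T ^ (j + 1) = E * (E ^ j - T ^ j) + (E - T) * T ^ j := by
      rw [pow_succ', pow_succ']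
      noncomm_ring
    rw [hstep, ih, Finset.mul_sum, Finset.sum_range_succ]
    congr 1
    · apply Finset.sum_congr rfl
      intro i hi
      rw [Finset.mem_range] at hi
      have : j + 1 - 1 - i = (j - 1 - i) + 1 := by omega
      rw [this, pow_succ']
      noncomm_ring
    · simp

theorem linear_ode_solution_error {N : ℕ}
    (A : EuclideanSpace ℂ (Fin N) →L[ℂ] EuclideanSpace ℂ (Fin N))
    (h : ℝ) (hh : 0 < h) (m k : ℕ) (hm : 0 < m) (hk : 0 < k) (c : ℕ)
    (hAh : ‖h • A‖ ≤ 1)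
    (hexp : ∀ t : ℝ, 0 ≤ t → ‖exp (t • A)‖ ≤ (c : ℝ) + 1)
    (hcond : 2 * m * ((c : ℝ) + 1) * ((c : ℝ) + 2) / (Nat.factorial (k + 1)) ≤ 1)
    (yin : EuclideanSpace ℂ (Fin N)) :
    ∀ j : ℕ, j ≤ m →
      ‖exp (((j : ℝ) * h) • A) yin -
          ((∑ l ∈ Finset.range (k + 1), (1 / (Nat.factorial l) : ℂ) • (h • A) ^ l) ^ j) yin‖ ≤
        2 * j * ((c : ℝ) + 1) * ((c : ℝ) + 2) * ‖yin‖ / (Nat.factorial (k + 1)) := by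
  set B := h • A with hB
  set T := ∑ l ∈ Finset.range (k + 1), (1 / (Nat.factorial l) : ℂ) • B ^ l with hT
  set E := exp B with hE
  have hfpos : (0 : ℝ) < ((k + 1).factorial : ℝ) := by positivity
  have hET : ‖E - T‖ ≤ 2 / ((k + 1).factorial : ℝ) := tail_bound k B hAh
  have hEexp : ∀ i : ℕ, E ^ i = exp (((i : ℝ) * h) • A) := by
    intro i
    have h1 : ((i : ℝ) * h) • A = i • B := by
      rw [hB, ← Nat.cast_smul_eq_nsmul ℝ i (h • A), smul_smul]
    let +nondep : NormedAlgebra ℚ (EuclideanSpace ℂ (Fin N) →L[ℂ] EuclideanSpace ℂ (Fin N)) :=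
      .restrictScalars ℚ ℂ _
    rw [h1, exp_nsmul]
  have hEpow : ∀ i : ℕ, ‖E ^ i‖ ≤ (c : ℝ) + 1 := by
    intro i
    rw [hEexp i]
    exact hexp _ (by positivity)
  have hD : ∀ i : ℕ, i ≤ m →
      2 * i * ((c : ℝ) + 1) * ((c : ℝ) + 2) / ((k + 1).factorial : ℝ) ≤ 1 := by
    intro i hi
    refine le_trans ?_ hcond
    have hcast : (i : ℝ) ≤ (m : ℝ) := Nat.cast_le.mpr hi
    gcongr
  have hTpow : ∀ i : ℕ, i ≤ m → ‖E ^ i - T ^ i‖ ≤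
      2 * i * ((c : ℝ) + 1) * ((c : ℝ) + 2) / ((k + 1).factorial : ℝ) →
      ‖T ^ i‖ ≤ (c : ℝ) + 2 := by
    intro i hi hRi
    have h0 : ‖T ^ i‖ ≤ ‖E ^ i‖ + ‖E ^ i - T ^ i‖ := by
      calc ‖T ^ i‖ = ‖E ^ i - (E ^ i - T ^ i)‖ := by rw [sub_sub_cancel]
      _ ≤ ‖E ^ i‖ + ‖E ^ i - T ^ i‖ := norm_sub_le _ _
    have h1 := hEpow i
    have h2 := hD i hi
    have : ‖T ^ i‖ ≤ ((c : ℝ) + 1) + 1 := by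
      calc ‖T ^ i‖ ≤ ‖E ^ i‖ + ‖E ^ i - T ^ i‖ := h0
      _ ≤ ((c : ℝ) + 1) + 1 := by linarith
    linarith
  have hmain : ∀ j : ℕ, j ≤ m → ‖E ^ j - T ^ j‖ ≤
      2 * j * ((c : ℝ) + 1) * ((c : ℝ) + 2) / ((k + 1).factorial : ℝ) := by
    intro j
    induction j using Nat.strong_induction_on with
    | _ j ih =>
      intro hj
      rw [telescope E T j]
      calc ‖∑ i ∈ Finset.range j, E ^ (j - 1 - i) * (E - T) * T ^ i‖ ≤
          ∑ i ∈ Finset.range j, ‖E ^ (j - 1 - i) * (E - T) * T ^ i‖ := norm_sum_le _ _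
      _ ≤ ∑ i ∈ Finset.range j,
            ((c : ℝ) + 1) * (2 / ((k + 1).factorial : ℝ)) * ((c : ℝ) + 2) := by
          apply Finset.sum_le_sum
          intro i hi
          rw [Finset.mem_range] at hi
          have him : i ≤ m := le_trans (Nat.le_of_lt hi) hj
          have hTi : ‖T ^ i‖ ≤ (c : ℝ) + 2 :=
            hTpow i him (ih i hi him)
          calc ‖E ^ (j - 1 - i) * (E - T) * T ^ i‖ ≤
              ‖E ^ (j - 1 - i) * (E - T)‖ * ‖T ^ i‖ := norm_mul_le _ _
          _ ≤ ‖E ^ (j - 1 - i)‖ * ‖E - T‖ * ‖T ^ i‖ := by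
              apply mul_le_mul_of_nonneg_right (norm_mul_le _ _) (norm_nonneg _)
          _ ≤ ((c : ℝ) + 1) * (2 / ((k + 1).factorial : ℝ)) * ((c : ℝ) + 2) := by
              gcongr <;> first
                | exact hEpow _
                | exact hET
                | exact hTi
      _ = 2 * j * ((c : ℝ) + 1) * ((c : ℝ) + 2) / ((k + 1).factorial : ℝ) := by
          rw [Finset.sum_const, Finset.card_range, nsmul_eq_mul]
          field_simp
  intro j hj
  have hrw : exp (((j : ℝ) * h) • A) yin - (T ^ j) yin = ((E ^ j - T ^ j)) yin := by
    rw [← hEexp j, ContinuousLinearMap.sub_apply]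
  rw [hrw]
  calc ‖(E ^ j - T ^ j) yin‖ ≤ ‖E ^ j - T ^ j‖ * ‖yin‖ :=
      ContinuousLinearMap.le_opNorm _ _
  _ ≤ (2 * j * ((c : ℝ) + 1) * ((c : ℝ) + 2) / ((k + 1).factorial : ℝ)) * ‖yin‖ :=
      mul_le_mul_of_nonneg_right (hmain j hj) (norm_nonneg _)
  _ = 2 * j * ((c : ℝ) + 1) * ((c : ℝ) + 2) * ‖yin‖ / (Nat.factorial (k + 1)) := by
      ring
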